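/- Let X be a complex Banach space, L : X → X a continuous linear operator, and P_s, P_u : X → X continuous linear projections with P_s + P_u = id_X and P_s∘P_u = P_u∘P_s = 0, each commuting with L. Assume there exist M > 0 and β_s, β_u > 0 such that ‖exp(tL)∘P_u‖ ≤ M·e^{β_u t} for all t ≤ 0 and ‖exp(tL)∘P_s‖ ≤ M·e^{−β_s t} for all t ≥ 0. Let 0 ≤ η < min(β_s, β_u) and let ν : ℝ → X be differentiable with ν'(t) = L(ν(t)) for all t ∈ ℝ and sup_{t∈ℝ} e^{−η|t|}‖ν(t)‖ < ∞. Then ν(t) = 0 for all t ∈ ℝ. -/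

import Mathlib

open Filter Topology

/-- Uniqueness in the weighted space: any solution of `ν' = Lν` with subexponential growth
`‖ν(t)‖ ≤ C e^{η|t|}`, `0 ≤ η < min(β_s, β_u)`, under an exponential dichotomy with
complementary projections `P_s + P_u = id`, vanishes identically. -/
theorem weighted_homogeneous_solution_zero
    {X : Type*} [NormedAddCommGroup X] [NormedSpace ℂ X] [CompleteSpace X]
    (L Ps Pu : X →L[ℂ] X)
    (hsum : Ps + Pu = ContinuousLinearMap.id ℂ X)
    (hPs : Ps.comp Ps = Ps) (hPu : Pu.comp Pu = Pu)
    (hPsu : Ps.comp Pu = 0) (hPus : Pu.comp Ps = 0)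
    (hLs : L.comp Ps = Ps.comp L) (hLu : L.comp Pu = Pu.comp L)
    (M βs βu : ℝ) (hM : 0 < M) (hβs : 0 < βs) (hβu : 0 < βu)
    (hu : ∀ t : ℝ, t ≤ 0 →
      ‖(NormedSpace.exp ((t : ℂ) • L)).comp Pu‖ ≤ M * Real.exp (βu * t))
    (hs : ∀ t : ℝ, 0 ≤ t →
      ‖(NormedSpace.exp ((t : ℂ) • L)).comp Ps‖ ≤ M * Real.exp (-βs * t))
    (η : ℝ) (hη0 : 0 ≤ η) (hη : η < min βs βu)
    (ν : ℝ → X) (hν : ∀ t : ℝ, HasDerivAt ν (L (ν t)) t)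
    (C : ℝ) (hbound : ∀ t : ℝ, Real.exp (-η * |t|) * ‖ν t‖ ≤ C) :
    ∀ t : ℝ, ν t = 0 := by
  have hηs : η < βs := lt_of_lt_of_le hη (min_le_left _ _)
  have hηu : η < βu := lt_of_lt_of_le hη (min_le_right _ _)
  set E : ℝ → X →L[ℂ] X := fun t => NormedSpace.exp ((t : ℂ) • L) with hEdef
  have hE0 : E 0 = 1 := by simp [hEdef, NormedSpace.exp_zero]
  have hEmul : ∀ a b : ℝ, E (a + b) = E a * E b := by
    intro a b
    have hc : Commute ((a : ℂ) • L) ((b : ℂ) • L) :=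
      ((Commute.refl L).smul_left _).smul_right _
    have : ((a + b : ℝ) : ℂ) • L = (a : ℂ) • L + (b : ℂ) • L := by
      push_cast; rw [add_smul]
    simp only [hEdef, this, NormedSpace.exp_add_of_commute_of_mem_ball (𝕂 := ℂ) hc
      ((NormedSpace.expSeries_radius_eq_top ℂ (X →L[ℂ] X)).symm ▸ edist_lt_top _ _)
      ((NormedSpace.expSeries_radius_eq_top ℂ (X →L[ℂ] X)).symm ▸ edist_lt_top _ _)]
  have hEinv : ∀ t : ℝ, E t * E (-t) = 1 := by
    intro t; rw [← hEmul, add_neg_cancel, hE0]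
  have hEinv' : ∀ t : ℝ, E (-t) * E t = 1 := by
    intro t; rw [← hEmul, neg_add_cancel, hE0]
  have hE : ∀ t : ℝ, HasDerivAt E (E t * L) t := by
    intro t
    have h : HasDerivAt (fun s : ℂ => NormedSpace.exp (s • L))
        (NormedSpace.exp ((t : ℂ) • L) * L) (t : ℂ) :=
      hasDerivAt_exp_smul_const L (t : ℂ)
    have h2 := h.scomp t Complex.ofRealCLM.hasDerivAt
    simp only [Function.comp_def, Complex.ofRealCLM_apply, Complex.ofReal_one, one_smul] at h2; exact h2
  -- restrict scalars to ℝ to apply the product rule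
  set R : (X →L[ℂ] X) →L[ℝ] (X →L[ℝ] X) :=
    ContinuousLinearMap.restrictScalarsL ℂ X X ℝ ℝ with hRdef
  -- the function t ↦ E(-t) (ν t) is constant
  have hgconst : ∀ t : ℝ, E (-t) (ν t) = ν 0 := by
    have hg : ∀ t : ℝ, HasDerivAt (fun s => (R (E (-s))) (ν s)) 0 t := by
      intro t
      have h1 : HasDerivAt (fun s : ℝ => E (-s)) (-(E (-t) * L)) t := by
        have h := (hE (-t)).scomp t (hasDerivAt_neg t)
        simpa [Function.comp_def] using h
      have h2 : HasDerivAt (fun s : ℝ => R (E (-s))) (R (-(E (-t) * L))) t :=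
        R.hasFDerivAt.comp_hasDerivAt t h1
      have h3 := h2.clm_apply (hν t)
      have h5 : (R (-(E (-t) * L))) (ν t) + (R (E (-t))) (L (ν t)) = 0 := by
        show -((E (-t) * L) (ν t)) + (E (-t)) (L (ν t)) = 0
        rw [ContinuousLinearMap.mul_apply, neg_add_cancel]
      rw [h5] at h3
      exact h3
    intro t
    have hc : (fun s => (R (E (-s))) (ν s)) t = (fun s => (R (E (-s))) (ν s)) 0 :=
      is_const_of_deriv_eq_zero (fun s => (hg s).differentiableAt)
        (fun s => (hg s).deriv) t 0
    have hc' : E (-t) (ν t) = E (-0) (ν 0) := hc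
    rwa [neg_zero, hE0, ContinuousLinearMap.one_apply] at hc'
  have hsol : ∀ t : ℝ, ν t = E t (ν 0) := by
    intro t
    have := congrArg (E t) (hgconst t)
    rwa [← ContinuousLinearMap.comp_apply, ← ContinuousLinearMap.mul_def, hEinv t,
      ContinuousLinearMap.one_apply] at this
  -- commutations with the semigroup
  have hcommu : ∀ t : ℝ, ∀ x : X, Pu (E t x) = E t (Pu x) := by
    intro t x
    have h1 : Commute Pu L := hLu.symm
    have h2 : Commute Pu ((t : ℂ) • L) := h1.smul_right _
    have h3 : Commute Pu (E t) := h2.exp_right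
    exact DFunLike.congr_fun h3.eq x
  have hcomms : ∀ t : ℝ, ∀ x : X, Ps (E t x) = E t (Ps x) := by
    intro t x
    have h1 : Commute Ps L := hLs.symm
    have h2 : Commute Ps ((t : ℂ) • L) := h1.smul_right _
    have h3 : Commute Ps (E t) := h2.exp_right
    exact DFunLike.congr_fun h3.eq x
  -- bound on ν
  have hC0 : 0 ≤ C := by
    have := hbound 0
    simp only [abs_zero, mul_zero, Real.exp_zero, one_mul] at this
    exact le_trans (norm_nonneg _) this
  have hνb : ∀ t : ℝ, ‖ν t‖ ≤ C * Real.exp (η * |t|) := by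
    intro t
    have h := hbound t
    have h2 := mul_le_mul_of_nonneg_left h (Real.exp_pos (η * |t|)).le
    calc ‖ν t‖ = Real.exp (η * |t|) * (Real.exp (-η * |t|) * ‖ν t‖) := by
          rw [← mul_assoc, ← Real.exp_add]
          have : η * |t| + -η * |t| = 0 := by ring
          rw [this, Real.exp_zero, one_mul]
      _ ≤ Real.exp (η * |t|) * C := h2
      _ = C * Real.exp (η * |t|) := mul_comm _ _
  -- unstable projection vanishes
  have hPu0 : Pu (ν 0) = 0 := by
    have key : ∀ t : ℝ, 0 ≤ t → ‖Pu (ν 0)‖ ≤ M * C * Real.exp ((η - βu) * t) := by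
      intro t ht
      have happ : Pu (ν 0) = ((E (-t)).comp Pu) (ν t) := by
        rw [ContinuousLinearMap.comp_apply, hsol t, hcommu t,
          ← ContinuousLinearMap.mul_apply, hEinv', ContinuousLinearMap.one_apply]
      calc ‖Pu (ν 0)‖ = ‖((E (-t)).comp Pu) (ν t)‖ := by rw [happ]
        _ ≤ ‖(E (-t)).comp Pu‖ * ‖ν t‖ := ContinuousLinearMap.le_opNorm _ _
        _ ≤ (M * Real.exp (βu * (-t))) * (C * Real.exp (η * |t|)) := by
            have hb := hu (-t) (by linarith)
            have : ((-t : ℝ) : ℂ) • L = ((-t : ℝ) : ℂ) • L := rfl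
            exact mul_le_mul hb (hνb t) (norm_nonneg _) (by positivity)
        _ = M * C * Real.exp ((η - βu) * t) := by
            rw [abs_of_nonneg ht, show (M * Real.exp (βu * (-t))) * (C * Real.exp (η * t))
              = M * C * (Real.exp (βu * (-t)) * Real.exp (η * t)) from by ring,
              ← Real.exp_add]
            congr 1; ring
    have hlin : Tendsto (fun t : ℝ => (η - βu) * t) atTop atBot :=
      (tendsto_const_mul_atBot_of_neg (by linarith)).mpr tendsto_id
    have hexp : Tendsto (fun t : ℝ => Real.exp ((η - βu) * t)) atTop (𝓝 0) :=
      Real.tendsto_exp_atBot.comp hlin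
    have hlim : Tendsto (fun t : ℝ => M * C * Real.exp ((η - βu) * t)) atTop (𝓝 0) := by
      simpa using hexp.const_mul (M * C)
    have hle : ‖Pu (ν 0)‖ ≤ 0 :=
      ge_of_tendsto hlim (eventually_atTop.2 ⟨0, fun t ht => key t ht⟩)
    simpa using norm_le_zero_iff.mp hle
  -- stable projection vanishes
  have hPs0 : Ps (ν 0) = 0 := by
    have key : ∀ t : ℝ, t ≤ 0 → ‖Ps (ν 0)‖ ≤ M * C * Real.exp ((βs - η) * t) := by
      intro t ht
      have happ : Ps (ν 0) = ((E (-t)).comp Ps) (ν t) := by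
        rw [ContinuousLinearMap.comp_apply, hsol t, hcomms t,
          ← ContinuousLinearMap.mul_apply, hEinv', ContinuousLinearMap.one_apply]
      calc ‖Ps (ν 0)‖ = ‖((E (-t)).comp Ps) (ν t)‖ := by rw [happ]
        _ ≤ ‖(E (-t)).comp Ps‖ * ‖ν t‖ := ContinuousLinearMap.le_opNorm _ _
        _ ≤ (M * Real.exp (-βs * (-t))) * (C * Real.exp (η * |t|)) := by
            have hb := hs (-t) (by linarith)
            exact mul_le_mul hb (hνb t) (norm_nonneg _) (by positivity)
        _ = M * C * Real.exp ((βs - η) * t) := by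
            rw [abs_of_nonpos ht, show (M * Real.exp (-βs * (-t))) * (C * Real.exp (η * (-t)))
              = M * C * (Real.exp (-βs * (-t)) * Real.exp (η * (-t))) from by ring,
              ← Real.exp_add]
            congr 1; ring
    have hlin : Tendsto (fun t : ℝ => (βs - η) * t) atBot atBot :=
      (tendsto_const_mul_atBot_of_pos (by linarith)).mpr tendsto_id
    have hexp : Tendsto (fun t : ℝ => Real.exp ((βs - η) * t)) atBot (𝓝 0) :=
      Real.tendsto_exp_atBot.comp hlin
    have hlim : Tendsto (fun t : ℝ => M * C * Real.exp ((βs - η) * t)) atBot (𝓝 0) := by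
      simpa using hexp.const_mul (M * C)
    have hle : ‖Ps (ν 0)‖ ≤ 0 :=
      ge_of_tendsto hlim (eventually_atBot.2 ⟨0, fun t ht => key t ht⟩)
    simpa using norm_le_zero_iff.mp hle
  have hν0 : ν 0 = 0 := by
    have h := DFunLike.congr_fun hsum (ν 0)
    simp only [ContinuousLinearMap.add_apply, ContinuousLinearMap.id_apply] at h
    rw [hPs0, hPu0, add_zero] at h
    exact h.symm
  intro t
  rw [hsol t, hν0, map_zero]
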